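/- Let Π be a nonempty S_C-invariant family of probability measures on Δ_C with finite first moments and F(p) = sup_{ℙ∈Π} E_{p'∼ℙ}[‖p' - p‖]. Then the uniform distribution attains the minimax: F(uniform) = inf_{p∈Δ_C} F(p). -/

import Mathlib

open MeasureTheory

def simplex (C : ℕ) : Set (EuclideanSpace ℝ (Fin C)) :=
  {p | (∀ i, 0 ≤ p i) ∧ ∑ i, p i = 1}

def permAct (C : ℕ) (σ : Equiv.Perm (Fin C)) (p : EuclideanSpace ℝ (Fin C)) :
    EuclideanSpace ℝ (Fin C) :=
  WithLp.toLp 2 (fun c => p (σ⁻¹ c))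

lemma sum_apply'' {ι : Type*} (s : Finset ι) {m : ℕ} (f : ι → EuclideanSpace ℝ (Fin m)) (c : Fin m) :
    (∑ i ∈ s, f i) c = ∑ i ∈ s, f i c := by
  induction s using Finset.cons_induction with
  | empty => rfl
  | cons a s ha ih => rw [Finset.sum_cons, Finset.sum_cons, ← ih]; rfl

lemma permAct_norm (C : ℕ) (σ : Equiv.Perm (Fin C)) (x : EuclideanSpace ℝ (Fin C)) :
    ‖permAct C σ x‖ = ‖x‖ := by
  rw [EuclideanSpace.norm_eq, EuclideanSpace.norm_eq]
  congr 1
  exact Fintype.sum_equiv σ⁻¹ _ _ (fun i => rfl)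

lemma permAct_sub (C : ℕ) (σ : Equiv.Perm (Fin C)) (a b : EuclideanSpace ℝ (Fin C)) :
    permAct C σ (a - b) = permAct C σ a - permAct C σ b := by
  ext c; simp [permAct]

lemma permAct_cancel (C : ℕ) (σ : Equiv.Perm (Fin C)) (x : EuclideanSpace ℝ (Fin C)) :
    permAct C σ (permAct C σ⁻¹ x) = x := by
  ext c
  show x (σ⁻¹⁻¹ (σ⁻¹ c)) = x c
  rw [inv_inv]; simp

lemma continuous_permAct (C : ℕ) (σ : Equiv.Perm (Fin C)) : Continuous (permAct C σ) :=
  (PiLp.continuous_toLp 2 _).comp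
    (continuous_pi fun _ => (continuous_apply _).comp (PiLp.continuous_ofLp 2 _))

lemma norm_le_one_of_mem (C : ℕ) (p : EuclideanSpace ℝ (Fin C)) (hp : p ∈ simplex C) :
    ‖p‖ ≤ 1 := by
  rw [EuclideanSpace.norm_eq]
  rw [show (1:ℝ) = Real.sqrt 1 by simp]
  apply Real.sqrt_le_sqrt
  rw [← hp.2]
  apply Finset.sum_le_sum
  intro i _
  have h0 := hp.1 i
  have h1 : p i ≤ 1 := by
    rw [← hp.2]
    exact Finset.single_le_sum (fun j _ => hp.1 j) (Finset.mem_univ i)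
  rw [Real.norm_eq_abs, abs_of_nonneg h0]
  nlinarith

theorem uniform_attains_minimax (C : ℕ) (hC : 1 ≤ C)
    (Pi : Set (Measure (EuclideanSpace ℝ (Fin C)))) (hne : Pi.Nonempty)
    (hprob : ∀ P ∈ Pi, IsProbabilityMeasure P)
    (hsupp : ∀ P ∈ Pi, P (simplex C)ᶜ = 0)
    (hmom : ∀ P ∈ Pi, Integrable (fun p' => ‖p'‖) P)
    (hinv : ∀ P ∈ Pi, ∀ σ : Equiv.Perm (Fin C), Measure.map (permAct C σ) P ∈ Pi)
    (F : EuclideanSpace ℝ (Fin C) → ℝ)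
    (hF : ∀ p, F p = sSup {x | ∃ P ∈ Pi, x = ∫ p', ‖p' - p‖ ∂P})
    (u : EuclideanSpace ℝ (Fin C)) (hu : ∀ c, u c = 1 / C) :
    F u = sInf (F '' simplex C) := by
  obtain ⟨n, rfl⟩ : ∃ n, C = n + 1 := ⟨C - 1, (Nat.succ_pred_eq_of_pos hC).symm⟩
  have hCpos : (0:ℝ) < ((n+1 : ℕ):ℝ) := by positivity
  have hCne : ((n+1 : ℕ):ℝ) ≠ 0 := ne_of_gt hCpos
  -- integrability of translated norms
  have hint : ∀ P ∈ Pi, ∀ q : EuclideanSpace ℝ (Fin (n+1)), Integrable (fun p' => ‖p' - q‖) P := by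
    intro P hP q
    haveI := hprob P hP
    refine ((hmom P hP).add (integrable_const ‖q‖)).mono
      ((continuous_id.sub continuous_const).norm).aestronglyMeasurable ?_
    filter_upwards with x
    have h1 : ‖x - q‖ ≤ ‖x‖ + ‖q‖ := norm_sub_le _ _
    have h2 : (0:ℝ) ≤ ‖x‖ + ‖q‖ := by positivity
    simpa [Real.norm_eq_abs, abs_of_nonneg (norm_nonneg (x - q)), abs_of_nonneg h2] using h1
  -- boundedness of the sSup sets
  have hbdd : ∀ q : EuclideanSpace ℝ (Fin (n+1)), BddAbove {x | ∃ P ∈ Pi, x = ∫ p', ‖p' - q‖ ∂P} := by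
    intro q
    refine ⟨1 + ‖q‖, ?_⟩
    rintro x ⟨P, hP, rfl⟩
    haveI := hprob P hP
    have hae : ∀ᵐ p' ∂P, p' ∈ simplex (n+1) := by
      rw [ae_iff]
      exact hsupp P hP
    calc ∫ p', ‖p' - q‖ ∂P ≤ ∫ _, (1 + ‖q‖) ∂P := by
          refine integral_mono_ae (hint P hP q) (integrable_const _) ?_
          filter_upwards [hae] with p' hp'
          calc ‖p' - q‖ ≤ ‖p'‖ + ‖q‖ := norm_sub_le _ _
            _ ≤ 1 + ‖q‖ := by linarith [norm_le_one_of_mem (n+1) p' hp']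
      _ = 1 + ‖q‖ := by simp
  -- the key inequality
  have hle : ∀ p ∈ simplex (n+1), F u ≤ F p := by
    intro p hp
    rw [hF u]
    obtain ⟨P0, hP0⟩ := hne
    refine csSup_le ⟨∫ p', ‖p' - u‖ ∂P0, P0, hP0, rfl⟩ ?_
    rintro x ⟨P, hP, rfl⟩
    haveI := hprob P hP
    -- cyclic permutations
    set τ : Fin (n+1) → Equiv.Perm (Fin (n+1)) := fun k => Equiv.addLeft k with hτ
    set v : Fin (n+1) → EuclideanSpace ℝ (Fin (n+1)) := fun k => permAct (n+1) (τ k) p with hv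
    -- pointwise: sum of shifted coordinates is 1
    have hsum : ∀ c : Fin (n+1), ∑ k, v k c = 1 := by
      intro c
      have : ∑ k : Fin (n+1), v k c = ∑ i, p i :=
        Fintype.sum_equiv (Equiv.subLeft c) _ _ (by
          intro k
          show p ((τ k)⁻¹ c) = p (Equiv.subLeft c k)
          refine congrArg p.ofLp ?_
          simp [hτ, Equiv.Perm.inv_def, sub_eq_neg_add])
      rw [this, hp.2]
    -- vector identity
    have hvec : ∀ p' : EuclideanSpace ℝ (Fin (n+1)),
        p' - u = (((n+1 : ℕ):ℝ))⁻¹ • ∑ k, (p' - v k) := by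
      intro p'
      ext c
      have h1 : ((((n+1 : ℕ):ℝ))⁻¹ • ∑ k, (p' - v k)) c = (((n+1 : ℕ):ℝ))⁻¹ * (∑ k, (p' - v k)) c := rfl
      rw [h1, sum_apply'']
      have h2 : ∀ k : Fin (n+1), (p' - v k) c = p' c - v k c := fun k => rfl
      simp only [h2]
      rw [Finset.sum_sub_distrib, hsum c, Finset.sum_const, Finset.card_univ]
      have : (Fintype.card (Fin (n+1)) : ℝ) = ((n+1 : ℕ):ℝ) := by simp
      show p' c - u c = (((n+1 : ℕ):ℝ))⁻¹ * ((Fintype.card (Fin (n+1))) • p' c - 1)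
      rw [nsmul_eq_mul, this, hu c]
      field_simp
    -- pointwise norm bound
    have hnorm : ∀ p' : EuclideanSpace ℝ (Fin (n+1)),
        ‖p' - u‖ ≤ (((n+1 : ℕ):ℝ))⁻¹ * ∑ k, ‖p' - v k‖ := by
      intro p'
      calc ‖p' - u‖ = ‖(((n+1 : ℕ):ℝ))⁻¹ • ∑ k, (p' - v k)‖ := by rw [hvec p']
        _ = (((n+1 : ℕ):ℝ))⁻¹ * ‖∑ k, (p' - v k)‖ := by
              rw [norm_smul, Real.norm_eq_abs, abs_of_pos (inv_pos.mpr hCpos)]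
        _ ≤ (((n+1 : ℕ):ℝ))⁻¹ * ∑ k, ‖p' - v k‖ :=
              mul_le_mul_of_nonneg_left (norm_sum_le _ _) (le_of_lt (inv_pos.mpr hCpos))
    -- each shifted integral is ≤ F p
    have hterm : ∀ k : Fin (n+1), ∫ p', ‖p' - v k‖ ∂P ≤ F p := by
      intro k
      have hmap : Measure.map (permAct (n+1) (τ k)⁻¹) P ∈ Pi := hinv P hP _
      have hchg : ∫ q, ‖q - p‖ ∂(Measure.map (permAct (n+1) (τ k)⁻¹) P)
          = ∫ p', ‖permAct (n+1) (τ k)⁻¹ p' - p‖ ∂P := by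
        refine integral_map (continuous_permAct (n+1) _).aemeasurable ?_
        exact ((continuous_id.sub continuous_const).norm).aestronglyMeasurable
      have heq : ∀ p' : EuclideanSpace ℝ (Fin (n+1)),
          ‖permAct (n+1) (τ k)⁻¹ p' - p‖ = ‖p' - v k‖ := by
        intro p'
        rw [← permAct_norm (n+1) (τ k), permAct_sub, permAct_cancel]
      have : ∫ p', ‖p' - v k‖ ∂P ∈ {x | ∃ P ∈ Pi, x = ∫ p', ‖p' - p‖ ∂P} := by
        refine ⟨_, hmap, ?_⟩
        rw [hchg]
        simp only [heq]
      rw [hF p]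
      exact le_csSup (hbdd p) this
    -- put it together
    calc ∫ p', ‖p' - u‖ ∂P
        ≤ ∫ p', (((n+1 : ℕ):ℝ))⁻¹ * ∑ k, ‖p' - v k‖ ∂P := by
          refine integral_mono (hint P hP u) ?_ hnorm
          exact (integrable_finset_sum _ (fun k _ => hint P hP (v k))).const_mul _
      _ = (((n+1 : ℕ):ℝ))⁻¹ * ∑ k, ∫ p', ‖p' - v k‖ ∂P := by
          rw [integral_const_mul, integral_finset_sum _ (fun k _ => hint P hP (v k))]
      _ ≤ (((n+1 : ℕ):ℝ))⁻¹ * ∑ _k : Fin (n+1), F p := by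
          refine mul_le_mul_of_nonneg_left ?_ (le_of_lt (inv_pos.mpr hCpos))
          exact Finset.sum_le_sum fun k _ => hterm k
      _ = F p := by
          rw [Finset.sum_const, Finset.card_univ, Fintype.card_fin, nsmul_eq_mul]
          field_simp
  -- u lies in the simplex
  have humem : u ∈ simplex (n+1) := by
    constructor
    · intro i; rw [hu i]; positivity
    · simp only [hu]
      rw [Finset.sum_const, Finset.card_univ]
      simp [nsmul_eq_mul]
      field_simp
  refine le_antisymm ?_ ?_
  · refine le_csInf ⟨F u, u, humem, rfl⟩ ?_
    rintro y ⟨p, hp, rfl⟩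
    exact hle p hp
  · refine csInf_le ⟨F u, ?_⟩ ⟨u, humem, rfl⟩
    rintro y ⟨p, hp, rfl⟩
    exact hle p hp
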